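/- For n ≥ 1 and the quadrature weights R_j(t) = -(2π/n) Σ_{m=1}^{n-1} (1/m) cos[m(t − ς_j)] − (π/n²) cos[n(t − ς_j)] with nodes ς_j = πj/n (j = 0,...,2n−1), the quadrature rule Σ_{j=0}^{2n-1} R_j(t) f(ς_j) is exact for the integral ∫₀^{2π} ln(4 sin²((t−ς)/2)) f(ς) dς whenever f is a trigonometric polynomial of the form f(ς) = cos(kς) or sin(kς) with 0 ≤ k ≤ n−1. -/

import Mathlib

open Real intervalIntegral MeasureTheory Filter Topology

/-- The quadrature node ς_j = πj/n. -/
noncomputable def node (n j : ℕ) : ℝ := Real.pi * j / n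

/-- The logarithmic quadrature weight
R_j(t) = −(2π/n)Σ_{m=1}^{n−1}(1/m)cos[m(t−ς_j)] − (π/n²)cos[n(t−ς_j)]. -/
noncomputable def Rweight (n : ℕ) (t : ℝ) (j : ℕ) : ℝ :=
  -(2 * Real.pi / n) * (∑ m ∈ Finset.Icc 1 (n - 1),
      (1 / (m : ℝ)) * Real.cos ((m : ℝ) * (t - node n j)))
    - (Real.pi / (n : ℝ) ^ 2) * Real.cos ((n : ℝ) * (t - node n j))

lemma aux_not_dvd (n : ℕ) (l : ℤ) (h0 : l ≠ 0) (habs : |l| < 2 * n) :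
    ¬ ((2 * (n : ℤ)) ∣ l) := by
  intro h
  have h2 : (2 * (n:ℤ)) ∣ |l| := (dvd_abs _ _).mpr h
  have := Int.le_of_dvd (abs_pos.mpr h0) h2
  omega

lemma sum_cos_node (n : ℕ) (hn : 0 < n) (c : ℝ) (l : ℤ)
    (hl : ¬ ((2 * (n : ℤ)) ∣ l)) :
    ∑ j ∈ Finset.range (2 * n), Real.cos (c + l * (Real.pi / n) * j) = 0 := by
  have hn' : (n : ℝ) ≠ 0 := Nat.cast_ne_zero.mpr hn.ne'
  set θ : ℝ := l * (Real.pi / n) with hθ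
  set z : ℂ := Complex.exp (θ * Complex.I) with hz
  have hz1 : z ≠ 1 := by
    intro h
    rw [hz, Complex.exp_eq_one_iff] at h
    obtain ⟨q, hq⟩ := h
    have h1 : θ = q * (2 * Real.pi) := by
      have := congrArg Complex.im hq
      simpa using this
    rw [hθ] at h1
    have h2 : (l : ℝ) * Real.pi = (2 * n * q) * Real.pi := by
      field_simp at h1
      rw [h1]; ring
    have h3 : (l : ℝ) = ((2 * n * q : ℤ) : ℝ) := by
      have := mul_right_cancel₀ Real.pi_ne_zero h2
      push_cast
      exact this
    have h4 : l = 2 * n * q := by exact_mod_cast h3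
    exact hl ⟨q, by linarith⟩
  have hzN : z ^ (2 * n) = 1 := by
    rw [hz, ← Complex.exp_nat_mul]
    have : (2 * n : ℕ) * ((θ : ℂ) * Complex.I) = (l : ℂ) * (2 * Real.pi * Complex.I) := by
      rw [hθ]
      have hnc : (n : ℂ) ≠ 0 := by exact_mod_cast hn'
      push_cast
      field_simp
    rw [this]
    exact Complex.exp_int_mul_two_pi_mul_I l
  have hgeom : ∑ j ∈ Finset.range (2 * n), z ^ j = 0 := by
    rw [geom_sum_eq hz1, hzN]
    simp
  have hterm : ∀ j ∈ Finset.range (2 * n),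
      Real.cos (c + l * (Real.pi / n) * j) = (Complex.exp (c * Complex.I) * z ^ j).re := by
    intro j _
    rw [hz, ← Complex.exp_nat_mul, ← Complex.exp_add]
    have : (c : ℂ) * Complex.I + (j : ℕ) * ((θ : ℂ) * Complex.I)
        = ((c + l * (Real.pi / n) * j : ℝ) : ℂ) * Complex.I := by
      rw [hθ]; push_cast; ring
    rw [this, Complex.exp_ofReal_mul_I_re]
  rw [Finset.sum_congr rfl hterm, ← Complex.re_sum, ← Finset.mul_sum, hgeom, mul_zero,
    Complex.zero_re]

lemma cos_mul_cos (x y : ℝ) :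
    Real.cos x * Real.cos y = (Real.cos (x + y) + Real.cos (x - y)) / 2 := by
  rw [Real.cos_add, Real.cos_sub]; ring

lemma innerSumCos (n : ℕ) (hn : 0 < n) (t φ : ℝ) (m k : ℕ)
    (hm : 1 ≤ m) (hm' : m ≤ n) (hk : k < n) :
    ∑ j ∈ Finset.range (2 * n),
      Real.cos ((m : ℝ) * (t - node n j)) * Real.cos ((k : ℝ) * node n j - φ)
      = if m = k then n * Real.cos ((k : ℝ) * t - φ) else 0 := by
  have hnr : (n : ℝ) ≠ 0 := Nat.cast_ne_zero.mpr hn.ne'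
  have hsplit : ∀ j ∈ Finset.range (2 * n),
      Real.cos ((m : ℝ) * (t - node n j)) * Real.cos ((k : ℝ) * node n j - φ)
      = (Real.cos (((m : ℝ) * t - φ) + (((k : ℤ) - m) : ℤ) * (Real.pi / n) * j)
        + Real.cos (((m : ℝ) * t + φ) + ((-((m : ℤ) + k)) : ℤ) * (Real.pi / n) * j)) / 2 := by
    intro j _
    rw [cos_mul_cos]
    have e1 : (m : ℝ) * (t - node n j) + ((k : ℝ) * node n j - φ)
        = ((m : ℝ) * t - φ) + (((k : ℤ) - m) : ℤ) * (Real.pi / n) * j := by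
      unfold node; push_cast; field_simp; ring
    have e2 : (m : ℝ) * (t - node n j) - ((k : ℝ) * node n j - φ)
        = ((m : ℝ) * t + φ) + ((-((m : ℤ) + k)) : ℤ) * (Real.pi / n) * j := by
      unfold node; push_cast; field_simp; ring
    rw [e1, e2]
  rw [Finset.sum_congr rfl hsplit, ← Finset.sum_div, Finset.sum_add_distrib]
  have h2 : ∑ j ∈ Finset.range (2 * n),
      Real.cos (((m : ℝ) * t + φ) + ((-((m : ℤ) + k)) : ℤ) * (Real.pi / n) * j) = 0 := by
    refine sum_cos_node n hn _ _ (aux_not_dvd n _ (by omega) ?_)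
    rw [abs_neg, abs_of_nonneg (by positivity)]
    push_cast
    omega
  rw [h2, add_zero]
  by_cases hmk : m = k
  · subst hmk
    have h1 : ∀ j ∈ Finset.range (2 * n),
        Real.cos (((m : ℝ) * t - φ) + (((m : ℤ) - m) : ℤ) * (Real.pi / n) * j)
        = Real.cos ((m : ℝ) * t - φ) := by
      intro j _; norm_num
    rw [Finset.sum_congr rfl h1, Finset.sum_const, Finset.card_range, if_pos rfl]
    push_cast
    ring
  · have h1 : ∑ j ∈ Finset.range (2 * n),
        Real.cos (((m : ℝ) * t - φ) + (((k : ℤ) - m) : ℤ) * (Real.pi / n) * j) = 0 := by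
      refine sum_cos_node n hn _ _ (aux_not_dvd n _ (by omega) ?_)
      rw [abs_sub_lt_iff]
      constructor <;> push_cast <;> omega
    rw [h1, if_neg hmk]
    norm_num

lemma discrete_side (n : ℕ) (hn : 1 ≤ n) (t φ : ℝ) (k : ℕ) (hk : k < n) :
    ∑ j ∈ Finset.range (2 * n), Rweight n t j * Real.cos ((k : ℝ) * node n j - φ)
      = -(2 * Real.pi / k) * Real.cos ((k : ℝ) * t - φ) := by
  have hn0 : 0 < n := hn
  have hnr : (n : ℝ) ≠ 0 := Nat.cast_ne_zero.mpr hn0.ne'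
  have hper : ∀ j ∈ Finset.range (2 * n),
      Rweight n t j * Real.cos ((k : ℝ) * node n j - φ)
      = (∑ m ∈ Finset.Icc 1 (n - 1), (-(2 * Real.pi / n) * (1 / (m : ℝ))) *
            (Real.cos ((m : ℝ) * (t - node n j)) * Real.cos ((k : ℝ) * node n j - φ)))
        + (-(Real.pi / (n : ℝ) ^ 2)) *
            (Real.cos ((n : ℝ) * (t - node n j)) * Real.cos ((k : ℝ) * node n j - φ)) := by
    intro j _
    unfold Rweight
    rw [sub_mul, Finset.mul_sum, Finset.sum_mul, sub_eq_add_neg]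
    congr 1
    · exact Finset.sum_congr rfl fun m _ => by ring
    · ring
  rw [Finset.sum_congr rfl hper, Finset.sum_add_distrib, Finset.sum_comm]
  have hlast : ∑ j ∈ Finset.range (2 * n), (-(Real.pi / (n : ℝ) ^ 2)) *
      (Real.cos ((n : ℝ) * (t - node n j)) * Real.cos ((k : ℝ) * node n j - φ)) = 0 := by
    rw [← Finset.mul_sum, innerSumCos n hn0 t φ n k hn le_rfl hk,
      if_neg (by omega : ¬ n = k), mul_zero]
  rw [hlast, add_zero]
  have hmain : ∀ m ∈ Finset.Icc 1 (n - 1),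
      ∑ j ∈ Finset.range (2 * n), (-(2 * Real.pi / n) * (1 / (m : ℝ))) *
        (Real.cos ((m : ℝ) * (t - node n j)) * Real.cos ((k : ℝ) * node n j - φ))
      = if m = k then (-(2 * Real.pi / n) * (1 / (k : ℝ))) * ((n : ℝ) * Real.cos ((k : ℝ) * t - φ)) else 0 := by
    intro m hm
    simp only [Finset.mem_Icc] at hm
    rw [← Finset.mul_sum, innerSumCos n hn0 t φ m k hm.1 (by omega) hk]
    by_cases h : m = k
    · subst h; simp
    · simp [h]
  rw [Finset.sum_congr rfl hmain, Finset.sum_ite_eq' (Finset.Icc 1 (n - 1)) k]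
  by_cases hk0 : k = 0
  · subst hk0
    rw [if_neg (by simp)]
    norm_num
  · rw [if_pos (by simp only [Finset.mem_Icc]; omega)]
    have hkr : (k : ℝ) ≠ 0 := Nat.cast_ne_zero.mpr hk0
    field_simp

lemma int_cos_zero (c : ℝ) : ∫ u in (0:ℝ)..(2*Real.pi), Real.cos c
    = 2 * Real.pi * Real.cos c := by
  simp [mul_comm]

lemma int_cos_ne (c : ℝ) (l : ℤ) (hl : l ≠ 0) :
    ∫ u in (0:ℝ)..(2*Real.pi), Real.cos (c + l * u) = 0 := by
  have hlr : (l : ℝ) ≠ 0 := Int.cast_ne_zero.mpr hl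
  have h : ∀ u : ℝ, Real.cos (c + l * u) = Real.cos ((l : ℝ) * u + c) := by
    intro u; ring_nf
  simp_rw [h]
  rw [integral_comp_mul_add Real.cos hlr c]
  rw [integral_cos]
  have : (l : ℝ) * (2 * Real.pi) + c = c + l * (2 * Real.pi) := by ring
  rw [this, Real.sin_add_int_mul_two_pi]
  simp

lemma int_cos (c : ℝ) (l : ℤ) :
    ∫ u in (0:ℝ)..(2*Real.pi), Real.cos (c + l * u)
      = if l = 0 then 2 * Real.pi * Real.cos c else 0 := by
  by_cases h : l = 0
  · subst h; simpa using int_cos_zero c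
  · rw [if_neg h]; exact int_cos_ne c l h

lemma termIntegral (t φ : ℝ) (k m : ℕ) (r : ℝ) :
    ∫ u in (0:ℝ)..(2*Real.pi),
      (-2 * (r ^ m * Real.cos ((m : ℝ) * u) / m)) * Real.cos ((k : ℝ) * (t - u) - φ)
      = if m = k then -(2 * Real.pi / k) * r ^ k * Real.cos ((k : ℝ) * t - φ) else 0 := by
  rcases Nat.eq_zero_or_pos m with hm | hm
  · subst hm
    simp only [Nat.cast_zero, div_zero, mul_zero, zero_mul, pow_zero,
      intervalIntegral.integral_zero]
    by_cases hk : 0 = k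
    · subst hk; norm_num
    · rw [if_neg hk]
  · have hmr : (m : ℝ) ≠ 0 := Nat.cast_ne_zero.mpr hm.ne'
    set c : ℝ := -2 * r ^ m / m with hc
    have hfun : ∀ u : ℝ,
        (-2 * (r ^ m * Real.cos ((m : ℝ) * u) / m)) * Real.cos ((k : ℝ) * (t - u) - φ)
        = (c / 2) * Real.cos (((k : ℝ) * t - φ) + (((m : ℤ) - k) : ℤ) * u)
          + (c / 2) * Real.cos ((-((k : ℝ) * t - φ)) + (((m : ℤ) + k) : ℤ) * u) := by
      intro u
      have : (-2 * (r ^ m * Real.cos ((m : ℝ) * u) / m)) * Real.cos ((k : ℝ) * (t - u) - φ)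
          = c * (Real.cos ((m : ℝ) * u) * Real.cos ((k : ℝ) * (t - u) - φ)) := by
        rw [hc]; ring
      rw [this, cos_mul_cos]
      have e1 : (m : ℝ) * u + ((k : ℝ) * (t - u) - φ)
          = ((k : ℝ) * t - φ) + (((m : ℤ) - k) : ℤ) * u := by push_cast; ring
      have e2 : (m : ℝ) * u - ((k : ℝ) * (t - u) - φ)
          = (-((k : ℝ) * t - φ)) + (((m : ℤ) + k) : ℤ) * u := by push_cast; ring
      rw [e1, e2]
      ring
    simp_rw [hfun]
    rw [intervalIntegral.integral_add (by apply Continuous.intervalIntegrable; fun_prop)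
      (by apply Continuous.intervalIntegrable; fun_prop),
      intervalIntegral.integral_const_mul, intervalIntegral.integral_const_mul, int_cos, int_cos,
      if_neg (by omega : ¬ ((m : ℤ) + k) = 0)]
    by_cases hmk : m = k
    · subst hmk
      rw [if_pos (by omega), if_pos rfl, hc]
      field_simp
      ring
    · rw [if_neg (by omega : ¬ ((m : ℤ) - k) = 0), if_neg hmk]
      simp

lemma hasSum_log_q (r u : ℝ) (hr0 : 0 ≤ r) (hr1 : r < 1) :
    HasSum (fun m : ℕ => -2 * (r ^ m * Real.cos ((m : ℝ) * u) / m))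
      (Real.log (1 - 2 * r * Real.cos u + r ^ 2)) := by
  set z : ℂ := (r : ℂ) * Complex.exp ((u : ℝ) * Complex.I) with hzdef
  have hznorm : ‖z‖ < 1 := by
    rw [hzdef]
    simp only [norm_mul, Complex.norm_real]
    rw [Complex.norm_exp_ofReal_mul_I]
    simpa [Real.norm_eq_abs, abs_of_nonneg hr0] using hr1
  have h := Complex.hasSum_taylorSeries_neg_log hznorm
  have hre := Complex.hasSum_re h
  have h2 := hre.mul_left (-2)
  have hterm : ∀ m : ℕ, -2 * ((z ^ m / (m : ℂ)).re)
      = -2 * (r ^ m * Real.cos ((m : ℝ) * u) / m) := by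
    intro m
    have hz : z ^ m / (m : ℂ) = ((r ^ m / m : ℝ) : ℂ) * Complex.exp ((((m : ℝ) * u : ℝ)) * Complex.I) := by
      rw [hzdef, mul_pow, ← Complex.exp_nat_mul]
      push_cast
      ring
    rw [hz, Complex.re_ofReal_mul, Complex.exp_ofReal_mul_I_re]
    ring
  have hval : -2 * ((-(Complex.log (1 - z))).re)
      = Real.log (1 - 2 * r * Real.cos u + r ^ 2) := by
    rw [Complex.neg_re, Complex.log_re]
    have : ‖1 - z‖ ^ 2 = 1 - 2 * r * Real.cos u + r ^ 2 := by
      rw [Complex.sq_norm, Complex.normSq_apply]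
      have hre1 : (1 - z).re = 1 - r * Real.cos u := by
        rw [hzdef]
        simp [Complex.sub_re, Complex.re_ofReal_mul, Complex.exp_ofReal_mul_I_re]
      have him1 : (1 - z).im = -(r * Real.sin u) := by
        rw [hzdef]
        simp [Complex.sub_im, Complex.im_ofReal_mul, Complex.exp_ofReal_mul_I_im]
      rw [hre1, him1]
      nlinarith [Real.sin_sq_add_cos_sq u]
    rw [← this, Real.log_pow]
    push_cast
    ring
  rw [← hval]
  simpa only [hterm] using h2

lemma abel_integral (t φ : ℝ) (k : ℕ) (r : ℝ) (hr0 : 0 ≤ r) (hr1 : r < 1) :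
    ∫ u in (0:ℝ)..(2*Real.pi),
      Real.log (1 - 2 * r * Real.cos u + r ^ 2) * Real.cos ((k : ℝ) * (t - u) - φ)
      = -(2 * Real.pi / k) * r ^ k * Real.cos ((k : ℝ) * t - φ) := by
  have hsum : HasSum
      (fun m : ℕ => ∫ u in (0:ℝ)..(2*Real.pi),
        (-2 * (r ^ m * Real.cos ((m : ℝ) * u) / m)) * Real.cos ((k : ℝ) * (t - u) - φ))
      (∫ u in (0:ℝ)..(2*Real.pi),
        Real.log (1 - 2 * r * Real.cos u + r ^ 2) * Real.cos ((k : ℝ) * (t - u) - φ)) := by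
    apply intervalIntegral.hasSum_integral_of_dominated_convergence
      (bound := fun (m : ℕ) (_ : ℝ) => 2 * r ^ m)
    · intro m
      exact (by fun_prop : Continuous fun u : ℝ =>
        (-2 * (r ^ m * Real.cos ((m : ℝ) * u) / m)) * Real.cos ((k : ℝ) * (t - u) - φ)).aestronglyMeasurable
    · intro m
      refine MeasureTheory.ae_of_all _ (fun u _ => ?_)
      rcases Nat.eq_zero_or_pos m with hm | hm
      · subst hm
        simp
      · have hmr : (1 : ℝ) ≤ m := by exact_mod_cast hm
        rw [norm_mul, Real.norm_eq_abs, Real.norm_eq_abs, abs_mul, abs_div, abs_mul]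
        have h1 : |Real.cos ((m : ℝ) * u)| ≤ 1 := Real.abs_cos_le_one _
        have h2 : |Real.cos ((k : ℝ) * (t - u) - φ)| ≤ 1 := Real.abs_cos_le_one _
        have h3 : |r ^ m| = r ^ m := abs_of_nonneg (pow_nonneg hr0 m)
        have h4 : |(m : ℝ)| = (m : ℝ) := abs_of_nonneg (by positivity)
        have h5 : |(-2 : ℝ)| = 2 := by norm_num
        rw [h3, h4, h5]
        have hrm : 0 ≤ r ^ m := pow_nonneg hr0 m
        have hX0 : 0 ≤ r ^ m * |Real.cos ((m : ℝ) * u)| / (m : ℝ) := by positivity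
        have hX : r ^ m * |Real.cos ((m : ℝ) * u)| / (m : ℝ) ≤ r ^ m := by
          rw [div_le_iff₀ (by linarith : (0:ℝ) < (m:ℝ))]
          nlinarith [abs_nonneg (Real.cos ((m : ℝ) * u))]
        nlinarith [abs_nonneg (Real.cos ((k : ℝ) * (t - u) - φ))]
    · refine MeasureTheory.ae_of_all _ (fun u _ => ?_)
      exact (summable_geometric_of_lt_one hr0 hr1).mul_left 2
    · exact intervalIntegrable_const
    · refine MeasureTheory.ae_of_all _ (fun u _ => ?_)
      exact (hasSum_log_q r u hr0 hr1).mul_right _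
  have hval : ∀ m : ℕ,
      (∫ u in (0:ℝ)..(2*Real.pi),
        (-2 * (r ^ m * Real.cos ((m : ℝ) * u) / m)) * Real.cos ((k : ℝ) * (t - u) - φ))
      = if m = k then -(2 * Real.pi / k) * r ^ k * Real.cos ((k : ℝ) * t - φ) else 0 :=
    fun m => termIntegral t φ k m r
  rw [funext hval] at hsum
  exact HasSum.unique hsum (hasSum_ite_eq k _)

lemma abs_rpow_half_eq (c x : ℝ) :
    |x - c| ^ (-(1/2) : ℝ) = (x - c) ^ (-(1/2) : ℝ) + (c - x) ^ (-(1/2) : ℝ) := by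
  rcases lt_trichotomy x c with h | h | h
  · have h1 : x - c < 0 := by linarith
    have h2 : (x - c) ^ (-(1/2) : ℝ) = 0 := by
      rw [Real.rpow_def_of_neg h1]
      norm_num
      rw [show (1/2 : ℝ) * π = π/2 by ring, Real.cos_pi_div_two]
    rw [h2, abs_of_neg h1, zero_add, neg_sub]
  · subst h
    simp [Real.zero_rpow (by norm_num : (-(1/2) : ℝ) ≠ 0)]
  · have h1 : c - x < 0 := by linarith
    have h2 : (c - x) ^ (-(1/2) : ℝ) = 0 := by
      rw [Real.rpow_def_of_neg h1]
      norm_num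
      rw [show (1/2 : ℝ) * π = π/2 by ring, Real.cos_pi_div_two]
    rw [h2, abs_of_pos (by linarith : 0 < x - c), add_zero]

lemma rpow_shift_integrable (c A B : ℝ) :
    IntervalIntegrable (fun x => |x - c| ^ (-(1/2) : ℝ)) volume A B := by
  have h1 : IntervalIntegrable (fun x => (x - c) ^ (-(1/2) : ℝ)) volume A B := by
    have := (intervalIntegrable_rpow' (by norm_num : (-1:ℝ) < -(1/2))
      (a := A - c) (b := B - c)).comp_sub_right c
    simpa using this
  have h2 : IntervalIntegrable (fun x => (c - x) ^ (-(1/2) : ℝ)) volume A B := by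
    have := (intervalIntegrable_rpow' (by norm_num : (-1:ℝ) < -(1/2))
      (a := c - A) (b := c - B)).comp_sub_left c
    simpa using this
  simpa only [← abs_rpow_half_eq] using h1.add h2

lemma sinRpowIntegrable :
    IntervalIntegrable (fun u => |Real.sin u| ^ (-(1/2) : ℝ)) volume 0 (2 * Real.pi) := by
  set C : ℝ := (2 / Real.pi) ^ (-(1/2) : ℝ) with hC
  have hCpos : 0 < C := Real.rpow_pos_of_pos (by positivity) _
  set g : ℝ → ℝ := fun u => C * (|u - 0| ^ (-(1/2) : ℝ) + |u - Real.pi| ^ (-(1/2) : ℝ)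
    + |u - 2 * Real.pi| ^ (-(1/2) : ℝ)) with hg
  have hgint : IntervalIntegrable g volume 0 (2 * Real.pi) :=
    (((rpow_shift_integrable 0 _ _).add (rpow_shift_integrable Real.pi _ _)).add
      (rpow_shift_integrable (2 * Real.pi) _ _)).const_mul C
  refine IntervalIntegrable.mono_fun' hgint ?_ ?_
  · apply Measurable.aestronglyMeasurable
    fun_prop
  · rw [Filter.EventuallyLE, MeasureTheory.ae_restrict_iff' measurableSet_uIoc]
    refine MeasureTheory.ae_of_all _ (fun u hu => ?_)
    rw [Set.uIoc_of_le (by positivity : (0:ℝ) ≤ 2 * Real.pi)] at hu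
    rw [Real.norm_eq_abs, abs_of_nonneg (Real.rpow_nonneg (abs_nonneg _) _)]
    rcases eq_or_ne (Real.sin u) 0 with hs | hs
    · rw [hs, abs_zero, Real.zero_rpow (by norm_num : (-(1/2) : ℝ) ≠ 0), hg]
      positivity
    · have hpi := Real.pi_pos
      have hu0 : 0 < u := hu.1
      have hu2 : u ≤ 2 * Real.pi := hu.2
      have hune : u ≠ Real.pi := fun h => hs (h ▸ Real.sin_pi)
      have hune2 : u ≠ 2 * Real.pi := fun h => hs (by rw [h, Real.sin_two_pi])
      set d : ℝ := min |u - 0| (min |u - Real.pi| (|u - 2 * Real.pi|)) with hd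
      have hdpos : 0 < d := by
        rw [hd]
        refine lt_min (by rw [sub_zero]; exact abs_pos.mpr hu0.ne') (lt_min ?_ ?_)
        · exact abs_pos.mpr (sub_ne_zero.mpr hune)
        · exact abs_pos.mpr (sub_ne_zero.mpr hune2)
      have hkey : 2 / Real.pi * d ≤ |Real.sin u| := by
        have hdiv : 0 < 2 / Real.pi := by positivity
        rcases le_or_gt u (Real.pi / 2) with h1 | h1
        · have : 2 / Real.pi * |u - 0| ≤ |Real.sin u| := by
            rw [sub_zero]
            exact Real.mul_abs_le_abs_sin (by rw [abs_of_pos hu0]; exact h1)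
          refine le_trans ?_ this
          have : d ≤ |u - 0| := min_le_left _ _
          nlinarith
        · rcases le_or_gt u (3 * Real.pi / 2) with h2 | h2
          · have habs : |u - Real.pi| ≤ Real.pi / 2 := by
              rw [abs_le]; constructor <;> linarith
            have : 2 / Real.pi * |u - Real.pi| ≤ |Real.sin (u - Real.pi)| :=
              Real.mul_abs_le_abs_sin habs
            rw [Real.sin_sub_pi, abs_neg] at this
            refine le_trans ?_ this
            have hmin : d ≤ |u - Real.pi| := le_trans (min_le_right _ _) (min_le_left _ _)
            nlinarith
          · have habs : |u - 2 * Real.pi| ≤ Real.pi / 2 := by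
              rw [abs_le]; constructor <;> linarith
            have : 2 / Real.pi * |u - 2 * Real.pi| ≤ |Real.sin (u - 2 * Real.pi)| :=
              Real.mul_abs_le_abs_sin habs
            rw [Real.sin_sub_two_pi] at this
            refine le_trans ?_ this
            have hmin : d ≤ |u - 2 * Real.pi| := le_trans (min_le_right _ _) (min_le_right _ _)
            nlinarith
      have hstep : |Real.sin u| ^ (-(1/2) : ℝ) ≤ (2 / Real.pi * d) ^ (-(1/2) : ℝ) :=
        Real.rpow_le_rpow_of_nonpos (by positivity) hkey (by norm_num)
      have hsplit : (2 / Real.pi * d) ^ (-(1/2) : ℝ) = C * d ^ (-(1/2) : ℝ) := by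
        rw [Real.mul_rpow (by positivity) hdpos.le, hC]
      have hdle : d ^ (-(1/2) : ℝ) ≤ |u - 0| ^ (-(1/2) : ℝ) + |u - Real.pi| ^ (-(1/2) : ℝ)
          + |u - 2 * Real.pi| ^ (-(1/2) : ℝ) := by
        have n1 : (0:ℝ) ≤ |u - 0| ^ (-(1/2) : ℝ) := Real.rpow_nonneg (abs_nonneg _) _
        have n2 : (0:ℝ) ≤ |u - Real.pi| ^ (-(1/2) : ℝ) := Real.rpow_nonneg (abs_nonneg _) _
        have n3 : (0:ℝ) ≤ |u - 2 * Real.pi| ^ (-(1/2) : ℝ) := Real.rpow_nonneg (abs_nonneg _) _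
        have hcases : d = |u - 0| ∨ d = |u - Real.pi| ∨ d = |u - 2 * Real.pi| := by
          rw [hd]
          rcases min_cases (|u - 0|) (min (|u - Real.pi|) (|u - 2 * Real.pi|)) with ⟨h, _⟩ | ⟨h, _⟩
          · exact Or.inl h
          · rcases min_cases (|u - Real.pi|) (|u - 2 * Real.pi|) with ⟨h', _⟩ | ⟨h', _⟩
            · exact Or.inr (Or.inl (h.trans h'))
            · exact Or.inr (Or.inr (h.trans h'))
        rcases hcases with h | h | h <;> rw [h] <;> linarith
      calc |Real.sin u| ^ (-(1/2) : ℝ) ≤ C * d ^ (-(1/2) : ℝ) := by rw [← hsplit]; exact hstep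
        _ ≤ g u := by
            rw [hg]
            have := mul_le_mul_of_nonneg_left hdle hCpos.le
            simpa using this

lemma ae_sin_ne : ∀ᵐ u : ℝ, Real.sin u ≠ 0 := by
  have hsub : {u : ℝ | ¬ Real.sin u ≠ 0} ⊆ Set.range (fun q : ℤ => (q : ℝ) * Real.pi) := by
    intro u hu
    simp only [Set.mem_setOf_eq, not_not] at hu
    obtain ⟨q, hq⟩ := Real.sin_eq_zero_iff.mp hu
    exact ⟨q, hq⟩
  rw [MeasureTheory.ae_iff]
  exact measure_mono_null hsub ((Set.countable_range _).measure_zero _)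

lemma ae_sin_half_ne : ∀ᵐ u : ℝ, Real.sin (u / 2) ≠ 0 := by
  have hsub : {u : ℝ | ¬ Real.sin (u / 2) ≠ 0} ⊆ Set.range (fun q : ℤ => (q : ℝ) * (2 * Real.pi)) := by
    intro u hu
    simp only [Set.mem_setOf_eq, not_not] at hu
    obtain ⟨q, hq⟩ := Real.sin_eq_zero_iff.mp hu
    refine ⟨q, ?_⟩
    show (q : ℝ) * (2 * Real.pi) = u
    linarith
  rw [MeasureTheory.ae_iff]
  exact measure_mono_null hsub ((Set.countable_range _).measure_zero _)

lemma key_integral (t φ : ℝ) (k : ℕ) :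
    ∫ u in (0:ℝ)..(2*Real.pi),
      Real.log (4 * Real.sin (u / 2) ^ 2) * Real.cos ((k : ℝ) * (t - u) - φ)
      = -(2 * Real.pi / k) * Real.cos ((k : ℝ) * t - φ) := by
  set rs : ℕ → ℝ := fun i => 1 - 1 / (i + 1) with hrs
  have hr0 : ∀ i, 0 ≤ rs i := by
    intro i
    have h1 : (1 : ℝ) / (i + 1) ≤ 1 := by
      rw [div_le_one (by positivity)]
      simp
    simp only [hrs]
    linarith
  have hr1 : ∀ i, rs i < 1 := by
    intro i
    have : (0:ℝ) < 1 / (i + 1) := by positivity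
    simp only [hrs]
    linarith
  have htend : Tendsto rs atTop (𝓝 1) := by
    have : Tendsto (fun n : ℕ => 1 / ((n : ℝ) + 1)) atTop (𝓝 0) := tendsto_one_div_add_atTop_nhds_zero_nat
    have h2 := this.const_sub 1
    simpa [hrs] using h2
  have hDCT : Tendsto (fun i => ∫ u in (0:ℝ)..(2*Real.pi),
      Real.log (1 - 2 * rs i * Real.cos u + (rs i) ^ 2) * Real.cos ((k : ℝ) * (t - u) - φ))
      atTop (𝓝 (∫ u in (0:ℝ)..(2*Real.pi),
        Real.log (4 * Real.sin (u / 2) ^ 2) * Real.cos ((k : ℝ) * (t - u) - φ))) := by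
    apply intervalIntegral.tendsto_integral_filter_of_dominated_convergence
      (bound := fun u => Real.log 4 + 4 * |Real.sin u| ^ (-(1/2) : ℝ))
    · refine Filter.Eventually.of_forall (fun i => ?_)
      apply Measurable.aestronglyMeasurable
      apply Measurable.mul
      · exact Real.measurable_log.comp (by fun_prop)
      · fun_prop
    · refine Filter.Eventually.of_forall (fun i => ?_)
      filter_upwards [ae_sin_ne] with u hsu _
      set q : ℝ := 1 - 2 * rs i * Real.cos u + (rs i) ^ 2 with hq
      have hs2pos : 0 < Real.sin u ^ 2 := by
        have h := sq_nonneg (Real.sin u)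
        rcases h.lt_or_eq with h' | h'
        · exact h'
        · exact absurd (pow_eq_zero_iff (by norm_num) |>.mp h'.symm) hsu
      have hqlo : Real.sin u ^ 2 ≤ q := by
        have := Real.sin_sq_add_cos_sq u
        nlinarith [sq_nonneg (rs i - Real.cos u)]
      have hqpos : 0 < q := lt_of_lt_of_le hs2pos hqlo
      have hqhi : q ≤ 4 := by
        nlinarith [Real.neg_one_le_cos u, hr0 i, hr1 i]
      have hsin2le : Real.sin u ^ 2 ≤ 1 := Real.sin_sq_le_one u
      have hlog4 : (0:ℝ) ≤ Real.log 4 := Real.log_nonneg (by norm_num)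
      have hlogsin : Real.log (Real.sin u ^ 2) ≤ 0 := Real.log_nonpos hs2pos.le hsin2le
      have habs : |Real.log q| ≤ Real.log 4 + -(Real.log (Real.sin u ^ 2)) := by
        rw [abs_le]
        constructor
        · have := Real.log_le_log hs2pos hqlo
          linarith
        · have := Real.log_le_log hqpos hqhi
          linarith
      have hbig : -(Real.log (Real.sin u ^ 2)) ≤ 4 * |Real.sin u| ^ (-(1/2) : ℝ) := by
        set s : ℝ := |Real.sin u| with hsdef
        have hs : 0 < s := abs_pos.mpr hsu
        have e1 : Real.sin u ^ 2 = s ^ 2 := (sq_abs _).symm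
        have e2 : Real.log (s ^ 2) = 2 * Real.log s := by
          rw [Real.log_pow]; push_cast; ring
        have e3 : Real.log (s ^ (-(1/2) : ℝ)) = -(1/2) * Real.log s :=
          Real.log_rpow hs _
        have e4 : Real.log (s ^ (-(1/2) : ℝ)) ≤ s ^ (-(1/2) : ℝ) := by
          have := Real.log_le_sub_one_of_pos (Real.rpow_pos_of_pos hs (-(1/2) : ℝ))
          linarith
        rw [e1, e2]
        nlinarith
      rw [norm_mul, Real.norm_eq_abs, Real.norm_eq_abs]
      calc |Real.log q| * |Real.cos ((k : ℝ) * (t - u) - φ)|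
          ≤ |Real.log q| * 1 :=
            mul_le_mul_of_nonneg_left (Real.abs_cos_le_one _) (abs_nonneg _)
        _ = |Real.log q| := mul_one _
        _ ≤ Real.log 4 + -(Real.log (Real.sin u ^ 2)) := habs
        _ ≤ Real.log 4 + 4 * |Real.sin u| ^ (-(1/2) : ℝ) := by linarith
    · exact intervalIntegrable_const.add (sinRpowIntegrable.const_mul 4)
    · filter_upwards [ae_sin_half_ne] with u hsu _
      have hpos : 0 < 4 * Real.sin (u / 2) ^ 2 := by
        have : Real.sin (u / 2) ^ 2 > 0 := by
          rcases (sq_nonneg (Real.sin (u / 2))).lt_or_eq with h' | h'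
          · exact h'
          · exact absurd (pow_eq_zero_iff (by norm_num) |>.mp h'.symm) hsu
        linarith
      have hident : 1 - 2 * 1 * Real.cos u + 1 ^ 2 = 4 * Real.sin (u / 2) ^ 2 := by
        have := Real.sin_sq_eq_half_sub (u / 2)
        have h2 : 2 * (u / 2) = u := by ring
        rw [h2] at this
        nlinarith
      have h1 : Tendsto (fun i => 1 - 2 * rs i * Real.cos u + (rs i) ^ 2) atTop
          (𝓝 (4 * Real.sin (u / 2) ^ 2)) := by
        rw [← hident]
        have hb : Tendsto (fun i => 1 - 2 * rs i * Real.cos u + (rs i) ^ 2) atTop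
            (𝓝 (1 - 2 * Real.cos u * 1 + 1 ^ 2)) :=
          (tendsto_const_nhds.sub ((htend.const_mul (2 * Real.cos u)).congr (fun i => by ring))).add
            (htend.pow 2)
        convert hb using 2
        ring
      have h2 : Tendsto (fun i => Real.log (1 - 2 * rs i * Real.cos u + (rs i) ^ 2)) atTop
          (𝓝 (Real.log (4 * Real.sin (u / 2) ^ 2))) :=
        (Real.continuousAt_log hpos.ne').tendsto.comp h1
      exact h2.mul_const _
  have hvals : ∀ i, (∫ u in (0:ℝ)..(2*Real.pi),
      Real.log (1 - 2 * rs i * Real.cos u + (rs i) ^ 2) * Real.cos ((k : ℝ) * (t - u) - φ))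
      = -(2 * Real.pi / k) * (rs i) ^ k * Real.cos ((k : ℝ) * t - φ) :=
    fun i => abel_integral t φ k (rs i) (hr0 i) (hr1 i)
  rw [funext hvals] at hDCT
  have hlim2 : Tendsto (fun i => -(2 * Real.pi / k) * (rs i) ^ k * Real.cos ((k : ℝ) * t - φ))
      atTop (𝓝 (-(2 * Real.pi / k) * Real.cos ((k : ℝ) * t - φ))) := by
    have := ((htend.pow k).const_mul (-(2 * Real.pi / (k:ℝ)))).mul_const (Real.cos ((k : ℝ) * t - φ))
    simpa using this
  exact tendsto_nhds_unique hDCT hlim2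

lemma shift_integral (t φ : ℝ) (k : ℕ) :
    ∫ ς in (0:ℝ)..(2*Real.pi),
      Real.log (4 * Real.sin ((t - ς) / 2) ^ 2) * Real.cos ((k : ℝ) * ς - φ)
      = ∫ u in (0:ℝ)..(2*Real.pi),
        Real.log (4 * Real.sin (u / 2) ^ 2) * Real.cos ((k : ℝ) * (t - u) - φ) := by
  set G : ℝ → ℝ := fun u =>
    Real.log (4 * Real.sin (u / 2) ^ 2) * Real.cos ((k : ℝ) * (t - u) - φ) with hG
  have hfun : ∀ ς : ℝ, Real.log (4 * Real.sin ((t - ς) / 2) ^ 2) * Real.cos ((k : ℝ) * ς - φ)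
      = G (t - ς) := by
    intro ς
    rw [hG]
    simp only
    rw [show t - (t - ς) = ς by ring]
  simp_rw [hfun]
  rw [intervalIntegral.integral_comp_sub_left G t]
  have hper : Function.Periodic G (2 * Real.pi) := by
    intro u
    rw [hG]
    simp only
    rw [show (u + 2 * Real.pi) / 2 = u / 2 + Real.pi by ring, Real.sin_add_pi,
      show (k : ℝ) * (t - (u + 2 * Real.pi)) - φ
        = ((k : ℝ) * (t - u) - φ) - ((k : ℤ) : ℝ) * (2 * Real.pi) by push_cast; ring,
      Real.cos_sub_int_mul_two_pi]
    ring_nf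
  have heq := hper.intervalIntegral_add_eq (t - 2 * Real.pi) 0
  rw [show t - 2 * Real.pi + 2 * Real.pi = t by ring, zero_add] at heq
  rw [sub_zero]
  exact heq

/-- The quadrature rule Σ_j R_j(t) f(ς_j) is exact for
∫₀^{2π} ln(4sin²((t−ς)/2)) f(ς) dς whenever f(ς) = cos(kς) or sin(kς)
with 0 ≤ k ≤ n−1. -/
theorem log_quadrature_exact (n : ℕ) (hn : 1 ≤ n) (t : ℝ) (k : ℕ) (hk : k < n) :
    (∑ j ∈ Finset.range (2 * n), Rweight n t j * Real.cos ((k : ℝ) * node n j))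
      = (∫ ς in (0 : ℝ)..(2 * Real.pi),
          Real.log (4 * Real.sin ((t - ς) / 2) ^ 2) * Real.cos ((k : ℝ) * ς)) ∧
    (∑ j ∈ Finset.range (2 * n), Rweight n t j * Real.sin ((k : ℝ) * node n j))
      = (∫ ς in (0 : ℝ)..(2 * Real.pi),
          Real.log (4 * Real.sin ((t - ς) / 2) ^ 2) * Real.sin ((k : ℝ) * ς)) := by
  constructor
  · have hL := discrete_side n hn t 0 k hk
    have hR := (shift_integral t 0 k).trans (key_integral t 0 k)
    simp only [sub_zero] at hL hR
    rw [hL, ← hR]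
  · have hL := discrete_side n hn t (Real.pi / 2) k hk
    have hR := (shift_integral t (Real.pi / 2) k).trans (key_integral t (Real.pi / 2) k)
    simp only [Real.cos_sub_pi_div_two] at hL hR
    rw [hL, ← hR]
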